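/- arXiv:1704.04254 — 2 statements merged into one kernel-verified Lean document; each statement's English description precedes it below -/
import Mathlib

section
/- Let 0 < d < π/4, λ₁ > 0 and 0 < b < λ₁/√2. There exists a constant C > 0, depending only on λ₁, b and d, such that for every real λ ≥ λ₁ and every y ∈ ℂ with |Im y| < d one has |z'(y) · (z(y) − λ)⁻¹| ≤ C. -/
set_option maxHeartbeats 1600000

/-- Two-parameter Mittag-Leffler function `e_{γ,μ}(z) = ∑ₖ zᵏ / Γ(kγ+μ)`,
with the reciprocal Gamma interpreted as `0` at non-positive integers. -/
noncomputable def mlf (γ μ : ℝ) (z : ℂ) : ℂ :=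
  ∑' k : ℕ, (Complex.Gamma (((k : ℝ) * γ + μ : ℝ) : ℂ))⁻¹ * z ^ k

/-- Hyperbolic contour `z(y) = b (cosh y + i sinh y)`. -/
noncomputable def zc (b : ℝ) (y : ℂ) : ℂ :=
  (b : ℂ) * (Complex.cosh y + Complex.I * Complex.sinh y)

/-- Derivative of the hyperbolic contour, `z'(y) = b (sinh y + i cosh y)`. -/
noncomputable def zcDeriv (b : ℝ) (y : ℂ) : ℂ :=
  (b : ℂ) * (Complex.sinh y + Complex.I * Complex.cosh y)

lemma zc_eq (b : ℝ) (y : ℂ) :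
    zc b y = ((b * (Real.cosh y.re * (Real.cos y.im - Real.sin y.im)) : ℝ) : ℂ)
      + ((b * (Real.sinh y.re * (Real.sin y.im + Real.cos y.im)) : ℝ) : ℂ) * Complex.I := by
  have hy : y = (y.re : ℂ) + (y.im : ℂ) * Complex.I := (Complex.re_add_im y).symm
  rw [zc, hy]
  rw [Complex.cosh_add, Complex.sinh_add, Complex.cosh_mul_I, Complex.sinh_mul_I]
  push_cast [Complex.ofReal_cosh, Complex.ofReal_sinh, Complex.ofReal_cos, Complex.ofReal_sin]
  ring_nf
  simp [Complex.I_sq]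
  ring

lemma zcDeriv_eq (b : ℝ) (y : ℂ) :
    zcDeriv b y = ((b * (Real.sinh y.re * (Real.cos y.im - Real.sin y.im)) : ℝ) : ℂ)
      + ((b * (Real.cosh y.re * (Real.sin y.im + Real.cos y.im)) : ℝ) : ℂ) * Complex.I := by
  have hy : y = (y.re : ℂ) + (y.im : ℂ) * Complex.I := (Complex.re_add_im y).symm
  rw [zcDeriv, hy]
  rw [Complex.cosh_add, Complex.sinh_add, Complex.cosh_mul_I, Complex.sinh_mul_I]
  push_cast [Complex.ofReal_cosh, Complex.ofReal_sinh, Complex.ofReal_cos, Complex.ofReal_sin]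
  ring_nf
  simp [Complex.I_sq]
  ring

lemma re_im_aux (r1 r2 lam : ℝ) :
    ((r1 : ℂ) + (r2 : ℂ) * Complex.I - (lam : ℂ)).re = r1 - lam ∧
    ((r1 : ℂ) + (r2 : ℂ) * Complex.I - (lam : ℂ)).im = r2 := by
  constructor <;>
    simp only [Complex.sub_re, Complex.add_re, Complex.ofReal_re, Complex.mul_re,
      Complex.ofReal_im, Complex.I_re, Complex.I_im, Complex.sub_im, Complex.add_im,
      Complex.mul_im] <;> ring

lemma aux_cos_sub_sin_le (v : ℝ) : Real.cos v - Real.sin v ≤ Real.sqrt 2 := by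
  have h1 : (Real.cos v - Real.sin v) ^ 2 ≤ 2 := by
    nlinarith [Real.sin_sq_add_cos_sq v, sq_nonneg (Real.cos v + Real.sin v)]
  calc Real.cos v - Real.sin v ≤ |Real.cos v - Real.sin v| := le_abs_self _
    _ = Real.sqrt ((Real.cos v - Real.sin v) ^ 2) := (Real.sqrt_sq_eq_abs _).symm
    _ ≤ Real.sqrt 2 := Real.sqrt_le_sqrt h1

lemma aux_abs_cos_sub_sin_le_two (v : ℝ) : |Real.cos v - Real.sin v| ≤ 2 := by
  rw [abs_le]; constructor <;>
    nlinarith [Real.neg_one_le_cos v, Real.cos_le_one v, Real.neg_one_le_sin v,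
      Real.sin_le_one v]

lemma aux_abs_sin_add_cos_le_two (v : ℝ) : |Real.sin v + Real.cos v| ≤ 2 := by
  rw [abs_le]; constructor <;>
    nlinarith [Real.neg_one_le_cos v, Real.cos_le_one v, Real.neg_one_le_sin v,
      Real.sin_le_one v]

lemma aux_abs_sinh_le_cosh (x : ℝ) : |Real.sinh x| ≤ Real.cosh x := by
  have h1 := Real.cosh_sq x
  have h2 := Real.cosh_pos x
  nlinarith [sq_abs (Real.sinh x), abs_nonneg (Real.sinh x)]

lemma aux_one_div_sq_lt_one {T : ℝ} (hT : 1 < T) : 1 / T ^ 2 < 1 := by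
  rw [div_lt_one (by positivity)]
  nlinarith

lemma aux_sinh_lower (T x : ℝ) (hT : 1 < T) (hcase : T ≤ Real.cosh x) :
    Real.sqrt (1 - 1 / T ^ 2) * Real.cosh x ≤ |Real.sinh x| := by
  have hTpos : (0:ℝ) < T := by linarith
  have hcosh := Real.cosh_pos x
  have hlt := aux_one_div_sq_lt_one hT
  have hssq : Real.sqrt (1 - 1 / T ^ 2) ^ 2 = 1 - 1 / T ^ 2 := Real.sq_sqrt (by linarith)
  have h2 : 1 ≤ Real.cosh x ^ 2 / T ^ 2 := by
    rw [le_div_iff₀ (by positivity)]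
    have := pow_le_pow_left₀ hTpos.le hcase 2
    linarith
  have h3 := Real.cosh_sq x
  have h4 : (Real.sqrt (1 - 1 / T ^ 2) * Real.cosh x) ^ 2
      = Real.cosh x ^ 2 - Real.cosh x ^ 2 / T ^ 2 := by
    rw [mul_pow, hssq]; field_simp
  have h1 : (Real.sqrt (1 - 1 / T ^ 2) * Real.cosh x) ^ 2 ≤ Real.sinh x ^ 2 := by linarith
  have hnn : (0:ℝ) ≤ Real.sqrt (1 - 1 / T ^ 2) * Real.cosh x := by positivity
  nlinarith [sq_abs (Real.sinh x), abs_nonneg (Real.sinh x)]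

/-- for `0 < d < π/4`, `λ₁ > 0`, `0 < b < λ₁/√2`, there is `C > 0`
(depending only on `λ₁, b, d`) with `|z'(y)·(z(y) - λ)⁻¹| ≤ C` for all `λ ≥ λ₁`
and all `y` in the open strip `|Im y| < d`. -/
theorem stmt1 (d lam1 b : ℝ) (hd : 0 < d) (hd' : d < Real.pi / 4)
    (hlam1 : 0 < lam1) (hb : 0 < b) (hb' : b < lam1 / Real.sqrt 2) :
    ∃ C : ℝ, 0 < C ∧ ∀ lam : ℝ, lam1 ≤ lam → ∀ y : ℂ, |y.im| < d →
      ‖zcDeriv b y * (zc b y - (lam : ℂ))⁻¹‖ ≤ C := by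
  have hpi : (0:ℝ) < Real.pi := Real.pi_pos
  have hs2 : (0:ℝ) < Real.sqrt 2 := Real.sqrt_pos.mpr (by norm_num)
  have hsb : Real.sqrt 2 * b < lam1 := by
    rw [lt_div_iff₀ hs2] at hb'; linarith
  -- c₁ := cos d - sin d > 0
  obtain ⟨c1, hc1, hc1P⟩ : ∃ c1 : ℝ, 0 < c1 ∧ ∀ v : ℝ, |v| < d →
      c1 ≤ Real.cos v - Real.sin v ∧ c1 ≤ Real.cos v + Real.sin v := by
    refine ⟨Real.cos d - Real.sin d, ?_, ?_⟩
    · have h1 : Real.sin d < Real.sin (Real.pi / 2 - d) := by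
        apply Real.sin_lt_sin_of_lt_of_le_pi_div_two (by linarith) (by linarith) (by linarith)
      rw [Real.sin_pi_div_two_sub] at h1
      linarith
    · intro v hv
      obtain ⟨hv1, hv2⟩ := abs_lt.mp hv
      have hcos : Real.cos d ≤ Real.cos v := by
        rw [← Real.cos_abs v]
        exact Real.cos_le_cos_of_nonneg_of_le_pi (abs_nonneg v) (by linarith) hv.le
      have hsin1 : Real.sin v ≤ Real.sin d := by
        apply Real.sin_le_sin_of_le_of_le_pi_div_two (by linarith) (by linarith) (by linarith)
      have hsin2 : -Real.sin d ≤ Real.sin v := by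
        have := Real.sin_le_sin_of_le_of_le_pi_div_two (x := -d) (y := v)
          (by linarith) (by linarith) (by linarith)
        rwa [Real.sin_neg] at this
      constructor <;> linarith
  -- δ := λ₁ - √2 b > 0
  obtain ⟨δ, hδ, hlamδ⟩ : ∃ δ : ℝ, 0 < δ ∧ lam1 = Real.sqrt 2 * b + δ :=
    ⟨lam1 - Real.sqrt 2 * b, by linarith, by ring⟩
  obtain ⟨T, hT, hTd⟩ : ∃ T : ℝ, 1 < T ∧ Real.sqrt 2 * b * T = Real.sqrt 2 * b + δ / 2 := by
    refine ⟨1 + δ / (2 * Real.sqrt 2 * b), ?_, ?_⟩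
    · have : 0 < δ / (2 * Real.sqrt 2 * b) := div_pos hδ (by positivity)
      linarith
    · field_simp
  have hTpos : (0:ℝ) < T := by linarith
  obtain ⟨s, hs, hsP⟩ : ∃ s : ℝ, 0 < s ∧ ∀ x : ℝ, T ≤ Real.cosh x →
      s * Real.cosh x ≤ |Real.sinh x| := by
    refine ⟨Real.sqrt (1 - 1 / T ^ 2), ?_, fun x hx => aux_sinh_lower T x hT hx⟩
    exact Real.sqrt_pos.mpr (by linarith [aux_one_div_sq_lt_one hT])
  refine ⟨max (8 * b * T / δ) (4 / (c1 * s)), lt_max_of_lt_left (by positivity), ?_⟩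
  intro lam hlam y hyim
  set x := y.re with hxdef
  set v := y.im with hvdef
  obtain ⟨hf1, hf2⟩ := hc1P v hyim
  have hf3 : Real.cos v - Real.sin v ≤ Real.sqrt 2 := aux_cos_sub_sin_le v
  have hsinh : |Real.sinh x| ≤ Real.cosh x := aux_abs_sinh_le_cosh x
  have hcoshpos := Real.cosh_pos x
  have hcosh1 := Real.one_le_cosh x
  -- numerator bound
  have hnum : ‖zcDeriv b y‖ ≤ 4 * b * Real.cosh x := by
    rw [zcDeriv_eq]
    have step := norm_add_le
      ((b * (Real.sinh x * (Real.cos v - Real.sin v)) : ℝ) : ℂ)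
      (((b * (Real.cosh x * (Real.sin v + Real.cos v)) : ℝ) : ℂ) * Complex.I)
    rw [norm_mul, Complex.norm_I, mul_one, Complex.norm_real, Complex.norm_real, Real.norm_eq_abs, Real.norm_eq_abs] at step
    refine le_trans step ?_
    have h1 : |Real.cos v - Real.sin v| ≤ 2 := aux_abs_cos_sub_sin_le_two v
    have h2 : |Real.sin v + Real.cos v| ≤ 2 := aux_abs_sin_add_cos_le_two v
    have e1 : |Real.sinh x| * |Real.cos v - Real.sin v| ≤ Real.cosh x * 2 :=
      mul_le_mul hsinh h1 (abs_nonneg _) hcoshpos.le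
    have e2 : Real.cosh x * |Real.sin v + Real.cos v| ≤ Real.cosh x * 2 :=
      mul_le_mul_of_nonneg_left h2 hcoshpos.le
    have e1' := mul_le_mul_of_nonneg_left e1 hb.le
    have e2' := mul_le_mul_of_nonneg_left e2 hb.le
    rw [abs_mul, abs_mul, abs_mul, abs_mul, abs_of_pos hb, abs_of_pos hcoshpos]
    linarith [e1', e2']
  -- denominator re/im
  have haux := re_im_aux (b * (Real.cosh x * (Real.cos v - Real.sin v)))
    (b * (Real.sinh x * (Real.sin v + Real.cos v))) lam
  have hre : (zc b y - (lam : ℂ)).re = b * (Real.cosh x * (Real.cos v - Real.sin v)) - lam := by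
    rw [zc_eq]; exact haux.1
  have him : (zc b y - (lam : ℂ)).im = b * (Real.sinh x * (Real.sin v + Real.cos v)) := by
    rw [zc_eq]; exact haux.2
  have hD1 : |b * (Real.sinh x * (Real.sin v + Real.cos v))| ≤
      ‖zc b y - (lam : ℂ)‖ := by
    rw [← him]; exact Complex.abs_im_le_norm _
  have hD2 : lam - b * (Real.cosh x * (Real.cos v - Real.sin v)) ≤
      ‖zc b y - (lam : ℂ)‖ := by
    calc lam - b * (Real.cosh x * (Real.cos v - Real.sin v))
        ≤ |b * (Real.cosh x * (Real.cos v - Real.sin v)) - lam| := by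
          rw [abs_sub_comm]; exact le_abs_self _
      _ = |(zc b y - (lam : ℂ)).re| := by rw [hre]
      _ ≤ _ := Complex.abs_re_le_norm _
  set D := ‖zc b y - (lam : ℂ)‖ with hDdef
  rcases le_or_gt (Real.cosh x) T with hcase | hcase
  · -- small case: λ - Re z ≥ δ/2
    have hRe : b * (Real.cosh x * (Real.cos v - Real.sin v)) ≤ Real.sqrt 2 * b * T := by
      have h0 : (0:ℝ) ≤ Real.cos v - Real.sin v := by linarith
      have h5 : Real.cosh x * (Real.cos v - Real.sin v) ≤ T * Real.sqrt 2 :=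
        mul_le_mul hcase hf3 h0 hTpos.le
      have h6 := mul_le_mul_of_nonneg_left h5 hb.le
      linarith [h6]
    have hDlow : δ / 2 ≤ D := by linarith
    have hDpos : 0 < D := by linarith
    rw [norm_mul, norm_inv, ← div_eq_mul_inv, ← hDdef, div_le_iff₀ hDpos]
    have hfin : (8 * b * T / δ) * (δ / 2) = 4 * b * T := by field_simp; ring
    calc ‖zcDeriv b y‖ ≤ 4 * b * Real.cosh x := hnum
      _ ≤ 4 * b * T := by gcongr
      _ = (8 * b * T / δ) * (δ / 2) := hfin.symm
      _ ≤ (8 * b * T / δ) * D := by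
          apply mul_le_mul_of_nonneg_left hDlow (by positivity)
      _ ≤ _ := mul_le_mul_of_nonneg_right (le_max_left _ _) hDpos.le
  · -- big case: |sinh x| ≥ s cosh x
    have hsinh2 : s * Real.cosh x ≤ |Real.sinh x| := hsP x hcase.le
    have hD : b * c1 * (s * Real.cosh x) ≤ D := by
      have e1 : c1 * (s * Real.cosh x) ≤ |Real.sinh x| * (Real.sin v + Real.cos v) := by
        have := mul_le_mul hsinh2 hf2 hc1.le (abs_nonneg _)
        linarith [this]
      have e2 := mul_le_mul_of_nonneg_left e1 hb.le
      have e3 : b * (|Real.sinh x| * (Real.sin v + Real.cos v)) =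
          |b * (Real.sinh x * (Real.sin v + Real.cos v))| := by
        rw [abs_mul, abs_mul, abs_of_pos hb,
          abs_of_pos (show (0:ℝ) < Real.sin v + Real.cos v by linarith)]
      calc b * c1 * (s * Real.cosh x) ≤ b * (|Real.sinh x| * (Real.sin v + Real.cos v)) := by
            linarith
        _ = |b * (Real.sinh x * (Real.sin v + Real.cos v))| := e3
        _ ≤ D := hD1
    have hDpos : 0 < D := lt_of_lt_of_le (by positivity) hD
    rw [norm_mul, norm_inv, ← div_eq_mul_inv, ← hDdef, div_le_iff₀ hDpos]
    have hfin : (4 / (c1 * s)) * (b * c1 * (s * Real.cosh x)) = 4 * b * Real.cosh x := by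
      field_simp
    calc ‖zcDeriv b y‖ ≤ 4 * b * Real.cosh x := hnum
      _ = (4 / (c1 * s)) * (b * c1 * (s * Real.cosh x)) := hfin.symm
      _ ≤ (4 / (c1 * s)) * D := by
          apply mul_le_mul_of_nonneg_left hD (by positivity)
      _ ≤ _ := mul_le_mul_of_nonneg_right (le_max_right _ _) hDpos.le
end

section
/- Let γ, β ∈ (0,1), 0 < d < π/4, λ₁ > 0 and 0 < b < λ₁/√2. Then for every t > 0 and every real λ ≥ λ₁, the function y ↦ g_λ(y,t) is holomorphic (complex differentiable) on the open strip B_d = {y ∈ ℂ : |Im y| < d} and continuous on the closed strip {y ∈ ℂ : |Im y| ≤ d}. -/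
open Complex Real Set Nat


/-- The function `g_λ(y,t) = e_{γ,1}(-t^γ z(y)^β) · z'(y) · (z(y) - λ)⁻¹`. -/
noncomputable def gfun (γ β b t lam : ℝ) (y : ℂ) : ℂ :=
  mlf γ 1 (-(((t ^ γ : ℝ) : ℂ) * zc b y ^ (β : ℂ))) * zcDeriv b y * (zc b y - (lam : ℂ))⁻¹



-- factorial lower bound
lemma fact_ge_pow (M : ℕ) : ∀ n : ℕ, M ^ (n - M) ≤ n ! := by
  intro n
  induction n with
  | zero => simp
  | succ n ih =>
    rcases le_or_gt (n + 1) M with h | h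
    · simp [Nat.sub_eq_zero_of_le h, Nat.one_le_iff_ne_zero, Nat.factorial_ne_zero]
    · have hM : M ≤ n := Nat.lt_succ_iff.mp h
      have : n + 1 - M = (n - M) + 1 := by omega
      rw [this, pow_succ, Nat.factorial_succ]
      calc M ^ (n - M) * M ≤ n ! * (n+1) := Nat.mul_le_mul ih (by omega)
        _ = (n+1) * n ! := Nat.mul_comm _ _

lemma summable_mlf (γ : ℝ) (hγ : 0 < γ) (R : ℝ) (hR : 0 ≤ R) :
    Summable (fun k : ℕ => (Real.Gamma ((k : ℝ) * γ + 1))⁻¹ * R ^ k) := by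
  set M : ℕ := ⌈(R + 1) ^ γ⁻¹⌉₊ + 1 with hMdef
  have hM1 : (1 : ℝ) ≤ (M : ℝ) := by exact_mod_cast Nat.one_le_iff_ne_zero.mpr (by omega)
  have hMpos : (0 : ℝ) < (M : ℝ) := lt_of_lt_of_le one_pos hM1
  have hMR : R + 1 ≤ (M : ℝ) ^ γ := by
    have h1 : (R + 1) ^ γ⁻¹ ≤ (M : ℝ) := by
      have := Nat.le_ceil ((R + 1) ^ γ⁻¹)
      push_cast [hMdef]
      linarith
    calc R + 1 = ((R + 1) ^ γ⁻¹) ^ γ := (Real.rpow_inv_rpow (by linarith) hγ.ne').symm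
      _ ≤ (M : ℝ) ^ γ := Real.rpow_le_rpow (Real.rpow_nonneg (by linarith) _) h1 hγ.le
  have hMγpos : (0 : ℝ) < (M : ℝ) ^ γ := Real.rpow_pos_of_pos hMpos _
  set q : ℝ := R / (M : ℝ) ^ γ with hq
  have hq0 : 0 ≤ q := div_nonneg hR hMγpos.le
  have hq1 : q < 1 := (div_lt_one hMγpos).2 (by linarith)
  set N : ℕ := ⌈γ⁻¹⌉₊ with hNdef
  rw [← summable_nat_add_iff N]
  have C := (M : ℝ) ^ ((M : ℝ) + 1)
  apply Summable.of_nonneg_of_le (f := fun k => (M : ℝ) ^ ((M : ℝ) + 1) * q ^ (k + N))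
  · intro k
    have := Real.Gamma_pos_of_pos (show (0:ℝ) < ((k + N : ℕ) : ℝ) * γ + 1 by positivity)
    positivity
  · intro k
    set j : ℕ := k + N with hj
    have hjγ : 1 ≤ (j : ℝ) * γ := by
      have hN : γ⁻¹ ≤ (N : ℝ) := Nat.le_ceil _
      have : (N : ℝ) ≤ (j : ℝ) := by exact_mod_cast Nat.le_add_left N k
      calc (1:ℝ) = γ⁻¹ * γ := by field_simp
        _ ≤ (j : ℝ) * γ := by apply mul_le_mul_of_nonneg_right (le_trans hN this) hγ.le
    set n : ℕ := ⌊(j : ℝ) * γ⌋₊ with hn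
    have hn1 : 1 ≤ n := Nat.le_floor (by exact_mod_cast hjγ)
    have hnle : (n : ℝ) ≤ (j : ℝ) * γ := Nat.floor_le (by linarith)
    have hnlt : (j : ℝ) * γ < (n : ℝ) + 1 := Nat.lt_floor_add_one _
    -- Gamma lower bound
    have hn1' : (1 : ℝ) ≤ (n : ℝ) := by exact_mod_cast hn1
    have hmono : Real.Gamma ((n : ℝ) + 1) ≤ Real.Gamma ((j : ℝ) * γ + 1) := by
      rcases eq_or_lt_of_le (by linarith : (n : ℝ) + 1 ≤ (j : ℝ) * γ + 1) with h | h
      · rw [h]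
      · exact le_of_lt (Real.Gamma_strictMonoOn_Ici
          (mem_Ici.mpr (by linarith)) (mem_Ici.mpr (by linarith)) h)
    have hfact : ((n ! : ℕ) : ℝ) = Real.Gamma ((n : ℝ) + 1) := by
      rw [Real.Gamma_nat_eq_factorial]
    have hpow : (M : ℝ) ^ ((j : ℝ) * γ - 1 - (M : ℝ)) ≤ ((n ! : ℕ) : ℝ) := by
      have h1 : ((M ^ (n - M) : ℕ) : ℝ) ≤ ((n ! : ℕ) : ℝ) := by exact_mod_cast fact_ge_pow M n
      have h2 : (M : ℝ) ^ ((j : ℝ) * γ - 1 - (M : ℝ)) ≤ ((M ^ (n - M) : ℕ) : ℝ) := by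
        rw [Nat.cast_pow, ← Real.rpow_natCast (M : ℝ) (n - M)]
        apply Real.rpow_le_rpow_of_exponent_le hM1
        rcases le_or_gt M n with h | h
        · have : ((n - M : ℕ) : ℝ) = (n : ℝ) - (M : ℝ) := by
            push_cast [Nat.cast_sub h]; ring
          rw [this]; linarith
        · have : (n - M : ℕ) = 0 := Nat.sub_eq_zero_of_le h.le
          rw [this, Nat.cast_zero]
          have : ((n : ℝ)) < (M : ℝ) := by exact_mod_cast h
          linarith
      linarith
    have hGpos : (0 : ℝ) < (M : ℝ) ^ ((j : ℝ) * γ - 1 - (M : ℝ)) := Real.rpow_pos_of_pos hMpos _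
    have hGamma_ge : (M : ℝ) ^ ((j : ℝ) * γ - 1 - (M : ℝ)) ≤ Real.Gamma ((j : ℝ) * γ + 1) := by
      calc (M : ℝ) ^ ((j : ℝ) * γ - 1 - (M : ℝ)) ≤ ((n ! : ℕ) : ℝ) := hpow
        _ = Real.Gamma ((n : ℝ) + 1) := hfact
        _ ≤ _ := hmono
    have hinv : (Real.Gamma ((j : ℝ) * γ + 1))⁻¹ ≤ ((M : ℝ) ^ ((j : ℝ) * γ - 1 - (M : ℝ)))⁻¹ :=
      inv_anti₀ hGpos hGamma_ge
    have hsplit : ((M : ℝ) ^ ((j : ℝ) * γ - 1 - (M : ℝ)))⁻¹ = (M : ℝ) ^ ((M : ℝ) + 1) * ((M : ℝ) ^ ((j : ℝ) * γ))⁻¹ := by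
      rw [← Real.rpow_neg hMpos.le, ← Real.rpow_neg hMpos.le, ← Real.rpow_add hMpos]
      ring_nf
    have hqj : ((M : ℝ) ^ ((j : ℝ) * γ))⁻¹ * R ^ j = q ^ j := by
      rw [hq, div_pow, div_eq_mul_inv, mul_comm]
      congr 1
      congr 1
      rw [← Real.rpow_natCast ((M : ℝ) ^ γ) j, ← Real.rpow_mul hMpos.le]
      ring_nf
    calc (Real.Gamma ((j : ℝ) * γ + 1))⁻¹ * R ^ j
        ≤ ((M : ℝ) ^ ((j : ℝ) * γ - 1 - (M : ℝ)))⁻¹ * R ^ j := by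
          apply mul_le_mul_of_nonneg_right hinv (pow_nonneg hR j)
      _ = (M : ℝ) ^ ((M : ℝ) + 1) * (((M : ℝ) ^ ((j : ℝ) * γ))⁻¹ * R ^ j) := by rw [hsplit]; ring
      _ = (M : ℝ) ^ ((M : ℝ) + 1) * q ^ j := by rw [hqj]
  · exact ((summable_geometric_of_lt_one hq0 hq1).mul_left _).comp_injective
      (add_left_injective N)



lemma mlf_differentiable (γ : ℝ) (hγ : 0 < γ) : Differentiable ℂ (mlf γ 1) := by
  intro z
  have hR : (0 : ℝ) ≤ ‖z‖ + 1 := by positivity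
  have key : DifferentiableOn ℂ (mlf γ 1) (Metric.ball (0 : ℂ) (‖z‖ + 1)) := by
    have hu := summable_mlf γ hγ (‖z‖ + 1) hR
    have hbd : ∀ (k : ℕ) (w : ℂ), w ∈ Metric.ball (0 : ℂ) (‖z‖ + 1) →
        ‖(Complex.Gamma (((k : ℝ) * γ + 1 : ℝ) : ℂ))⁻¹ * w ^ k‖ ≤
          (Real.Gamma ((k : ℝ) * γ + 1))⁻¹ * (‖z‖ + 1) ^ k := by
      intro k w hw
      have hwn : ‖w‖ ≤ ‖z‖ + 1 := by
        have := mem_ball_zero_iff.mp hw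
        linarith
      have hΓpos : 0 < Real.Gamma ((k : ℝ) * γ + 1) :=
        Real.Gamma_pos_of_pos (by positivity)
      rw [norm_mul, norm_inv, norm_pow]
      rw [Complex.Gamma_ofReal]
      rw [Complex.norm_real, Real.norm_eq_abs, abs_of_pos hΓpos]
      exact mul_le_mul le_rfl (pow_le_pow_left₀ (norm_nonneg w) hwn k)
        (pow_nonneg (norm_nonneg w) k) (inv_nonneg.mpr hΓpos.le)
    have htu := tendstoUniformlyOn_tsum hu hbd
    have : TendstoLocallyUniformlyOn
        (fun (s : Finset ℕ) (w : ℂ) => ∑ k ∈ s, (Complex.Gamma (((k : ℝ) * γ + 1 : ℝ) : ℂ))⁻¹ * w ^ k)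
        (mlf γ 1) Filter.atTop (Metric.ball (0 : ℂ) (‖z‖ + 1)) :=
      htu.tendstoLocallyUniformlyOn
    exact this.differentiableOn
      (Filter.Eventually.of_forall fun s =>
        (DifferentiableOn.fun_sum fun k _ =>
          ((differentiable_const _).mul (differentiable_pow k)).differentiableOn))
      Metric.isOpen_ball
  exact key.differentiableAt (Metric.isOpen_ball.mem_nhds (by simp))



lemma zc_re (b : ℝ) (y : ℂ) : (zc b y).re = b * Real.cosh y.re * (Real.cos y.im - Real.sin y.im) := by
  simp [zc, Complex.cosh, Complex.sinh, Complex.exp_re, Complex.exp_im, Real.cosh_eq, Real.sinh_eq]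
  ring

lemma zc_im (b : ℝ) (y : ℂ) : (zc b y).im = b * Real.sinh y.re * (Real.sin y.im + Real.cos y.im) := by
  simp [zc, Complex.cosh, Complex.sinh, Complex.exp_re, Complex.exp_im, Real.cosh_eq, Real.sinh_eq]
  ring

lemma cos_sub_sin_eq (v : ℝ) : Real.cos v - Real.sin v = Real.sqrt 2 * Real.cos (v + Real.pi/4) := by
  rw [Real.cos_add, Real.cos_pi_div_four, Real.sin_pi_div_four]
  have h2 : Real.sqrt 2 * Real.sqrt 2 = 2 := Real.mul_self_sqrt (by norm_num)
  linear_combination (-(Real.cos v - Real.sin v)/2) * h2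

lemma sin_add_cos_eq (v : ℝ) : Real.sin v + Real.cos v = Real.sqrt 2 * Real.cos (v - Real.pi/4) := by
  rw [Real.cos_sub, Real.cos_pi_div_four, Real.sin_pi_div_four]
  have h2 : Real.sqrt 2 * Real.sqrt 2 = 2 := Real.mul_self_sqrt (by norm_num)
  linear_combination (-(Real.sin v + Real.cos v)/2) * h2

-- strip bounds
lemma cos_sub_sin_pos {d v : ℝ} (hd' : d < Real.pi/4) (hv : |v| ≤ d) :
    0 < Real.cos v - Real.sin v := by
  rw [cos_sub_sin_eq]
  have hpi := Real.pi_pos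
  have h1 : -d ≤ v := neg_le_of_abs_le hv
  have h2 : v ≤ d := le_of_abs_le hv
  have hc : 0 < Real.cos (v + Real.pi/4) := by
    apply Real.cos_pos_of_mem_Ioo
    exact Set.mem_Ioo.mpr ⟨by nlinarith, by nlinarith⟩
  positivity
lemma sin_add_cos_pos {d v : ℝ} (hd : 0 < d) (hd' : d < Real.pi/4) (hv : |v| ≤ d) :
    0 < Real.sin v + Real.cos v := by
  rw [sin_add_cos_eq]
  have hpi := Real.pi_pos
  have h1 : -d ≤ v := neg_le_of_abs_le hv
  have h2 : v ≤ d := le_of_abs_le hv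
  have hc : 0 < Real.cos (v - Real.pi/4) := by
    apply Real.cos_pos_of_mem_Ioo
    exact Set.mem_Ioo.mpr ⟨by nlinarith, by nlinarith⟩
  positivity

lemma zc_re_pos {d b : ℝ} (hb : 0 < b) (hd' : d < Real.pi/4) {y : ℂ} (hy : |y.im| ≤ d) :
    0 < (zc b y).re := by
  rw [zc_re]
  have h1 := cos_sub_sin_pos hd' hy
  have h2 := Real.cosh_pos (x := y.re)
  positivity

lemma zc_ne_lam {d b lam1 lam : ℝ} (hd : 0 < d) (hd' : d < Real.pi/4) (hlam1 : 0 < lam1)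
    (hb : 0 < b) (hb' : b < lam1 / Real.sqrt 2) (hlam : lam1 ≤ lam) {y : ℂ} (hy : |y.im| ≤ d) :
    zc b y ≠ (lam : ℂ) := by
  intro h
  have him : (zc b y).im = 0 := by rw [h]; simp
  rw [zc_im] at him
  have hsc := sin_add_cos_pos hd hd' hy
  have hsinh : Real.sinh y.re = 0 := by
    rcases mul_eq_zero.mp him with h1 | h1
    · rcases mul_eq_zero.mp h1 with h2 | h2
      · exact absurd h2 hb.ne'
      · exact h2
    · exact absurd h1 hsc.ne'
  have hre0 : y.re = 0 := Real.sinh_eq_zero.mp hsinh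
  have hre : (zc b y).re = lam := by rw [h]; simp
  rw [zc_re, hre0, Real.cosh_zero] at hre
  have hsqrt2 : (0:ℝ) < Real.sqrt 2 := by positivity
  have hble : b * Real.sqrt 2 < lam1 := by
    rw [lt_div_iff₀ hsqrt2] at hb'
    exact hb'
  have hcos : Real.cos (y.im + Real.pi/4) ≤ 1 := Real.cos_le_one _
  have : b * (Real.cos y.im - Real.sin y.im) ≤ b * Real.sqrt 2 := by
    rw [cos_sub_sin_eq]
    calc b * (Real.sqrt 2 * Real.cos (y.im + Real.pi/4)) ≤ b * (Real.sqrt 2 * 1) := by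
          apply mul_le_mul_of_nonneg_left _ hb.le
          exact mul_le_mul_of_nonneg_left hcos hsqrt2.le
      _ = b * Real.sqrt 2 := by ring
  nlinarith [hre]


/-- `y ↦ g_λ(y,t)` is holomorphic on the open strip `|Im y| < d`
and continuous on the closed strip `|Im y| ≤ d`. -/
theorem stmt4 (γ β d lam1 b : ℝ) (hγ : γ ∈ Set.Ioo (0 : ℝ) 1)
    (hβ : β ∈ Set.Ioo (0 : ℝ) 1) (hd : 0 < d) (hd' : d < Real.pi / 4)
    (hlam1 : 0 < lam1) (hb : 0 < b) (hb' : b < lam1 / Real.sqrt 2) :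
    ∀ t : ℝ, 0 < t → ∀ lam : ℝ, lam1 ≤ lam →
      DifferentiableOn ℂ (fun y : ℂ => gfun γ β b t lam y) {y : ℂ | |y.im| < d} ∧
      ContinuousOn (fun y : ℂ => gfun γ β b t lam y) {y : ℂ | |y.im| ≤ d} := by
  intro t ht lam hlam
  have hdiff : ∀ y : ℂ, |y.im| ≤ d → DifferentiableAt ℂ (fun y : ℂ => gfun γ β b t lam y) y := by
    intro y hy
    have hzc : Differentiable ℂ (zc b) := by
      unfold zc
      exact (differentiable_const _).mul (Complex.differentiable_cosh.add
        ((differentiable_const _).mul Complex.differentiable_sinh))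
    have hzcd : Differentiable ℂ (zcDeriv b) := by
      unfold zcDeriv
      exact (differentiable_const _).mul (Complex.differentiable_sinh.add
        ((differentiable_const _).mul Complex.differentiable_cosh))
    have hslit : zc b y ∈ Complex.slitPlane :=
      Complex.mem_slitPlane_iff.mpr (Or.inl (zc_re_pos hb hd' hy))
    have hcpow : DifferentiableAt ℂ (fun w => zc b w ^ (β : ℂ)) y :=
      (hzc y).cpow (differentiableAt_const _) hslit
    have hmlfc : DifferentiableAt ℂ
        (fun w => mlf γ 1 (-(((t ^ γ : ℝ) : ℂ) * zc b w ^ (β : ℂ)))) y := by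
      have h := DifferentiableAt.comp (𝕜 := ℂ) y (g := mlf γ 1)
        (f := fun w => -(((t ^ γ : ℝ) : ℂ) * zc b w ^ (β : ℂ)))
        ((mlf_differentiable γ hγ.1) _) ((hcpow.const_mul _).neg)
      exact h
    have hne : zc b y - (lam : ℂ) ≠ 0 :=
      sub_ne_zero.2 (zc_ne_lam hd hd' hlam1 hb hb' hlam hy)
    have hinv : DifferentiableAt ℂ (fun w => (zc b w - (lam : ℂ))⁻¹) y :=
      ((hzc y).sub_const _).inv hne
    exact (hmlfc.mul (hzcd y)).mul hinv
  constructor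
  · exact fun y hy => (hdiff y (le_of_lt hy)).differentiableWithinAt
  · exact fun y hy => (hdiff y hy).continuousAt.continuousWithinAt
end
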